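/- Let Γ be a finite bipartite simple graph with parts O and E and adjacency matrix I. Suppose λ ∈ ℂ, λ ≠ 0, and u, w ∈ ℂ^V are supported on O and on E respectively, and (s_O ∘ s_E)(λ·u + w) = λ²·(λ·u + w). Then I·u = (λ + λ^{−1})·w and I·w = (λ + λ^{−1})·u; consequently I·(u + w) = (λ + λ^{−1})·(u + w) and I·(u − w) = −(λ + λ^{−1})·(u − w). -/

import Mathlib

open Finset

/-- The reflection `s_a` on `ℂ^V` attached to a vertex `a` of a simple graph `G`:
it sends the basis vector `e_a` to `−e_a` and `e_b` to `e_b + I_{ab}·e_a` for `b ≠ a`,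
where `I` is the adjacency matrix.  In coordinates, `(s_a v)_c = v_c` for `c ≠ a` and
`(s_a v)_a = (∑_b I_{ab} v_b) − v_a`. -/
noncomputable def sRef {V : Type*} [Fintype V] [DecidableEq V]
    (G : SimpleGraph V) [DecidableRel G.Adj] (a : V) (v : V → ℂ) : V → ℂ :=
  fun c => if c = a then (∑ b, if G.Adj a b then v b else 0) - v a else v c

/-- The composition `s_{a₁} ∘ s_{a₂} ∘ … ∘ s_{aₙ}` of reflections along a list
`L = [a₁, …, aₙ]` of vertices (the reflection at the last entry is applied first). -/
noncomputable def compList {V : Type*} [Fintype V] [DecidableEq V]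
    (G : SimpleGraph V) [DecidableRel G.Adj] (L : List V) (v : V → ℂ) : V → ℂ :=
  L.foldr (fun a w => sRef G a w) v

lemma compList_indep {V : Type*} [Fintype V] [DecidableEq V]
    (G : SimpleGraph V) [DecidableRel G.Adj] (L : List V) (v : V → ℂ) :
    L.Nodup → (∀ a ∈ L, ∀ b ∈ L, ¬ G.Adj a b) → ∀ c,
    compList G L v c = if c ∈ L then (∑ b, if G.Adj c b then v b else 0) - v c else v c := by
  induction L with
  | nil => intro _ _ c; simp [compList]
  | cons a L ih =>
    intro hnd hind c
    have hndL : L.Nodup := hnd.of_cons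
    have hindL : ∀ x ∈ L, ∀ y ∈ L, ¬ G.Adj x y := fun x hx y hy =>
      hind x (List.mem_cons_of_mem _ hx) y (List.mem_cons_of_mem _ hy)
    have key : compList G (a :: L) v c = sRef G a (compList G L v) c := rfl
    rw [key]
    unfold sRef
    by_cases hc : c = a
    · subst hc
      have haL : c ∉ L := (List.nodup_cons.mp hnd).1
      have h1 : compList G L v c = v c := by rw [ih hndL hindL c]; simp [haL]
      have h2 : ∀ b, G.Adj c b → compList G L v b = v b := by
        intro b hb
        rw [ih hndL hindL b]
        have hbL : b ∉ L := fun hbL => hind c (by simp) b (List.mem_cons_of_mem _ hbL) hb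
        simp [hbL]
      rw [if_pos rfl, if_pos (by simp), h1]
      congr 1
      refine Finset.sum_congr rfl fun b _ => ?_
      by_cases hab : G.Adj c b
      · simp [hab, h2 b hab]
      · simp [hab]
    · rw [if_neg hc, ih hndL hindL c]
      by_cases hcl : c ∈ L <;> simp [hcl, hc]

/-- Let `Γ` be a finite bipartite simple graph with parts `O` and `E`
and adjacency matrix `I`.  Suppose `t ∈ ℂ`, `t ≠ 0`, and `u, w ∈ ℂ^V` are supported on
`O` and on `E` respectively, and `(s_O ∘ s_E)(t·u + w) = t²·(t·u + w)` (where `s_O`, `s_E`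
are the compositions of the reflections over `O` resp. `E`, well defined since
reflections at non-adjacent vertices commute).  Then `I·u = (t + t⁻¹)·w` and
`I·w = (t + t⁻¹)·u`; consequently `I·(u + w) = (t + t⁻¹)·(u + w)` and
`I·(u − w) = −(t + t⁻¹)·(u − w)`. -/
theorem bipartite_coxeter_to_adjacency {V : Type*} [Fintype V] [DecidableEq V]
    (G : SimpleGraph V) [DecidableRel G.Adj]
    (O E : Finset V) (hdisj : Disjoint O E) (hcover : ∀ v : V, v ∈ O ∨ v ∈ E)
    (hbip : ∀ a b : V, G.Adj a b → (a ∈ O ∧ b ∈ E) ∨ (a ∈ E ∧ b ∈ O))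
    (LO LE : List V) (hLOnd : LO.Nodup) (hLEnd : LE.Nodup)
    (hLO : ∀ x : V, x ∈ LO ↔ x ∈ O) (hLE : ∀ x : V, x ∈ LE ↔ x ∈ E)
    (t : ℂ) (ht : t ≠ 0) (u w : V → ℂ)
    (hu : ∀ a : V, a ∉ O → u a = 0) (hw : ∀ a : V, a ∉ E → w a = 0)
    (heig : compList G LO (compList G LE (fun a => t * u a + w a))
      = fun a => t ^ 2 * (t * u a + w a)) :
    (∀ a : V, (∑ b, if G.Adj a b then u b else 0) = (t + t⁻¹) * w a) ∧
    (∀ a : V, (∑ b, if G.Adj a b then w b else 0) = (t + t⁻¹) * u a) ∧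
    (∀ a : V, (∑ b, if G.Adj a b then (u b + w b) else 0) = (t + t⁻¹) * (u a + w a)) ∧
    (∀ a : V, (∑ b, if G.Adj a b then (u b - w b) else 0) = -(t + t⁻¹) * (u a - w a)) := by
  set U : V → ℂ := fun a => ∑ b, if G.Adj a b then u b else 0 with hU
  set W : V → ℂ := fun a => ∑ b, if G.Adj a b then w b else 0 with hWdef
  set v : V → ℂ := fun a => t * u a + w a with hv
  -- membership facts
  have hOE : ∀ x ∈ O, x ∉ E := fun x hx => Finset.disjoint_left.mp hdisj hx
  have hEO : ∀ x ∈ E, x ∉ O := fun x hx => Finset.disjoint_right.mp hdisj hx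
  have hnbO : ∀ a ∈ O, ∀ b, G.Adj a b → b ∈ E := by
    intro a ha b hab
    rcases hbip a b hab with ⟨_, hbE⟩ | ⟨haE, _⟩
    · exact hbE
    · exact absurd haE (hOE a ha)
  have hnbE : ∀ a ∈ E, ∀ b, G.Adj a b → b ∈ O := by
    intro a ha b hab
    rcases hbip a b hab with ⟨haO, _⟩ | ⟨_, hbO⟩
    · exact absurd haO (hEO a ha)
    · exact hbO
  have hindE : ∀ x ∈ LE, ∀ y ∈ LE, ¬ G.Adj x y := by
    intro x hx y hy hxy
    exact hEO y ((hLE y).mp hy) (hnbE x ((hLE x).mp hx) y hxy)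
  have hindO : ∀ x ∈ LO, ∀ y ∈ LO, ¬ G.Adj x y := by
    intro x hx y hy hxy
    exact hOE y ((hLO y).mp hy) (hnbO x ((hLO x).mp hx) y hxy)
  -- vanishing of sums
  have hU0 : ∀ a ∈ O, U a = 0 := by
    intro a ha
    refine Finset.sum_eq_zero fun b _ => ?_
    by_cases hab : G.Adj a b
    · simp [hab, hu b (hEO b (hnbO a ha b hab))]
    · simp [hab]
  have hW0 : ∀ a ∈ E, W a = 0 := by
    intro a ha
    refine Finset.sum_eq_zero fun b _ => ?_
    by_cases hab : G.Adj a b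
    · simp [hab, hw b (hOE b (hnbE a ha b hab))]
    · simp [hab]
  have hSv : ∀ a, (∑ b, if G.Adj a b then v b else 0) = t * U a + W a := by
    intro a
    rw [hU, hWdef]
    simp only
    rw [Finset.mul_sum, ← Finset.sum_add_distrib]
    refine Finset.sum_congr rfl fun b _ => ?_
    by_cases hab : G.Adj a b <;> simp [hab, hv]
  set f : V → ℂ := compList G LE v with hf
  have hfE : ∀ c, f c = if c ∈ E then (t * U c + W c) - v c else v c := by
    intro c
    rw [hf, compList_indep G LE v hLEnd hindE c, hSv c]
    by_cases hc : c ∈ E <;> simp [hc, (hLE c)]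
  have hgO : ∀ c, compList G LO f c
      = if c ∈ O then (∑ b, if G.Adj c b then f b else 0) - f c else f c := by
    intro c
    rw [compList_indep G LO f hLOnd hindO c]
    by_cases hc : c ∈ O <;> simp [hc, (hLO c)]
  have heig' : ∀ c, compList G LO f c = t ^ 2 * v c := fun c => congrFun heig c
  -- first claim
  have claim1 : ∀ a, U a = (t + t⁻¹) * w a := by
    intro a
    by_cases ha : a ∈ E
    · have haO : a ∉ O := hEO a ha
      have h := heig' a
      rw [hgO a, if_neg haO, hfE a, if_pos ha] at h
      have hva : v a = w a := by simp [hv, hu a haO]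
      rw [hW0 a ha, hva] at h
      -- h : t * U a + 0 - w a = t ^ 2 * w a
      apply mul_left_cancel₀ ht
      field_simp
      linear_combination h
    · have haO : a ∈ O := (hcover a).resolve_right ha
      rw [hU0 a haO, hw a ha]
      ring
  -- second claim
  have claim2 : ∀ a, W a = (t + t⁻¹) * u a := by
    intro a
    by_cases haO : a ∈ O
    · have haE : a ∉ E := hOE a haO
      have h := heig' a
      rw [hgO a, if_pos haO, hfE a, if_neg haE] at h
      have hva : v a = t * u a := by simp [hv, hw a haE]
      have hsum : (∑ b, if G.Adj a b then f b else 0) = t ^ 2 * W a := by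
        rw [hWdef]; simp only
        rw [Finset.mul_sum]
        refine Finset.sum_congr rfl fun b _ => ?_
        by_cases hab : G.Adj a b
        · have hbE : b ∈ E := hnbO a haO b hab
          rw [if_pos hab, if_pos hab, hfE b, if_pos hbE, claim1 b]
          have hub : u b = 0 := hu b (hEO b hbE)
          have hwb : W b = 0 := hW0 b hbE
          rw [hwb]
          simp [hv, hub]
          field_simp
          ring
        · simp [hab]
      rw [hsum, hva] at h
      -- h : t ^ 2 * W a - t * u a = t ^ 2 * (t * u a)
      apply mul_left_cancel₀ (pow_ne_zero 2 ht)
      field_simp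
      apply mul_left_cancel₀ ht
      linear_combination h
    · have haE : a ∈ E := (hcover a).resolve_left haO
      rw [hW0 a haE, hu a haO]
      ring
  refine ⟨claim1, claim2, fun a => ?_, fun a => ?_⟩
  · have : (∑ b, if G.Adj a b then u b + w b else 0) = U a + W a := by
      rw [hU, hWdef]; simp only
      rw [← Finset.sum_add_distrib]
      refine Finset.sum_congr rfl fun b _ => ?_
      by_cases hab : G.Adj a b <;> simp [hab]
    rw [this, claim1 a, claim2 a]; ring
  · have : (∑ b, if G.Adj a b then u b - w b else 0) = U a - W a := by
      rw [hU, hWdef]; simp only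
      rw [← Finset.sum_sub_distrib]
      refine Finset.sum_congr rfl fun b _ => ?_
      by_cases hab : G.Adj a b <;> simp [hab]
    rw [this, claim1 a, claim2 a]; ring
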